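/- Suppose Σ is a d×d symmetric positive definite matrix and there exist positive constants C_1,…,C_d with Σ_{i,j} C_i R_{ji} θ_j θ_i = ½⟨θ, Σθ⟩ for all θ ∈ ℝ^d. Then R is a P-matrix. -/

import Mathlib

open Matrix

/-- A real square matrix is a P-matrix if every principal minor is positive. -/
def IsPMatrix {d : ℕ} (A : Matrix (Fin d) (Fin d) ℝ) : Prop :=
  ∀ s : Finset (Fin d),
    0 < (A.submatrix (fun i : s => (i : Fin d)) (fun j : s => (j : Fin d))).det

lemma det_pos_of_posQuad {n : Type*} [Fintype n] [DecidableEq n]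
    (A : Matrix n n ℝ) (h : ∀ x : n → ℝ, x ≠ 0 → 0 < x ⬝ᵥ A.mulVec x) : 0 < A.det := by
  set f : ℝ → ℝ := fun t => ((1 - t) • (1 : Matrix n n ℝ) + t • A).det with hf
  have hq : ∀ t ∈ Set.Icc (0:ℝ) 1, ∀ x : n → ℝ, x ≠ 0 →
      0 < x ⬝ᵥ ((1 - t) • (1 : Matrix n n ℝ) + t • A).mulVec x := by
    intro t ht x hx
    have hxx : 0 < x ⬝ᵥ x := by
      obtain ⟨i, hi⟩ := Function.ne_iff.mp hx
      have hi' : x i ≠ 0 := by simpa using hi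
      rw [dotProduct]
      exact Finset.sum_pos' (fun j _ => mul_self_nonneg (x j))
        ⟨i, Finset.mem_univ i, mul_self_pos.mpr hi'⟩
    have key : x ⬝ᵥ ((1 - t) • (1 : Matrix n n ℝ) + t • A).mulVec x
        = (1 - t) * (x ⬝ᵥ x) + t * (x ⬝ᵥ A.mulVec x) := by
      rw [Matrix.add_mulVec, Matrix.smul_mulVec, Matrix.smul_mulVec,
        Matrix.one_mulVec, dotProduct_add, dotProduct_smul, dotProduct_smul]
      simp [smul_eq_mul]
    rw [key]
    rcases lt_or_eq_of_le ht.1 with h0 | h0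
    · have := h x hx
      nlinarith [ht.2]
    · subst h0; simpa using hxx
  have hne : ∀ t ∈ Set.Icc (0:ℝ) 1, f t ≠ 0 := by
    intro t ht h0
    rw [hf] at h0
    obtain ⟨v, hv, hv0⟩ := (Matrix.exists_mulVec_eq_zero_iff).mpr h0
    have := hq t ht v hv
    rw [hv0] at this
    simp at this
  have hcont : Continuous f := by
    apply Continuous.matrix_det
    apply Continuous.add
    · exact (continuous_const.sub continuous_id).smul continuous_const
    · exact continuous_id.smul continuous_const
  have hf0 : f 0 = 1 := by simp [hf]
  have hf1 : f 1 = A.det := by simp [hf]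
  by_contra hA
  push_neg at hA
  have hA' : f 1 < 0 := lt_of_le_of_ne (hf1 ▸ hA) (hne 1 (by norm_num))
  have : (0:ℝ) ∈ Set.Icc (f 1) (f 0) := ⟨le_of_lt hA', by rw [hf0]; norm_num⟩
  obtain ⟨t, ht, hft⟩ := intermediate_value_Icc' (by norm_num : (0:ℝ) ≤ 1)
    hcont.continuousOn this
  exact hne t ht hft

theorem pmatrix_aux {d : ℕ}
    (S : Matrix (Fin d) (Fin d) ℝ) (hS : S.PosDef)
    (R : Matrix (Fin d) (Fin d) ℝ) (C : Fin d → ℝ) (hC : ∀ i, 0 < C i)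
    (hid : ∀ θ : Fin d → ℝ,
      ∑ i : Fin d, ∑ j : Fin d, C i * R j i * θ j * θ i
        = (1/2 : ℝ) * (θ ⬝ᵥ S.mulVec θ)) :
    ∀ s : Finset (Fin d),
      0 < (R.submatrix (fun i : s => (i : Fin d)) (fun j : s => (j : Fin d))).det := by
  set A : Matrix (Fin d) (Fin d) ℝ := Matrix.of fun i j => R i j * C j with hA
  have hAq : ∀ θ : Fin d → ℝ, θ ≠ 0 → 0 < θ ⬝ᵥ A.mulVec θ := by
    intro θ hθ
    have hsum : θ ⬝ᵥ A.mulVec θ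
        = ∑ i : Fin d, ∑ j : Fin d, C i * R j i * θ j * θ i := by
      rw [Finset.sum_comm]
      simp only [dotProduct, Matrix.mulVec, dotProduct, hA, Matrix.of_apply,
        Finset.mul_sum]
      apply Finset.sum_congr rfl; intro j _
      apply Finset.sum_congr rfl; intro i _
      ring
    rw [hsum, hid θ]
    have := hS.dotProduct_mulVec_pos hθ
    simp only [RCLike.re_to_real, star_trivial] at this
    linarith
  intro s
  set B : Matrix s s ℝ := A.submatrix (fun i : s => (i : Fin d)) (fun j : s => (j : Fin d))
    with hB
  have hBq : ∀ x : s → ℝ, x ≠ 0 → 0 < x ⬝ᵥ B.mulVec x := by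
    intro x hx
    set θ : Fin d → ℝ := fun i => if h : i ∈ s then x ⟨i, h⟩ else 0 with hθdef
    have hθ : θ ≠ 0 := by
      intro h0
      apply hx
      funext i
      have := congrFun h0 (i : Fin d)
      simpa [hθdef, i.2] using this
    have hform : x ⬝ᵥ B.mulVec x = θ ⬝ᵥ A.mulVec θ := by
      simp only [dotProduct, Matrix.mulVec, dotProduct, hB, Matrix.submatrix_apply]
      rw [← Finset.sum_subset (Finset.subset_univ s)
        (fun i _ hi => by simp [hθdef, hi]),
        ← Finset.sum_coe_sort s (fun i => θ i * ∑ j : Fin d, A i j * θ j)]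
      apply Finset.sum_congr rfl
      intro i _
      have hθi : θ (i : Fin d) = x i := by simp [hθdef, i.2]
      rw [hθi]
      congr 1
      rw [← Finset.sum_subset (Finset.subset_univ s)
        (fun j _ hj => by simp [hθdef, hj]),
        ← Finset.sum_coe_sort s (fun j => A (i : Fin d) j * θ j)]
      apply Finset.sum_congr rfl
      intro j _
      have : θ (j : Fin d) = x j := by simp [hθdef, j.2]
      rw [this]
    rw [hform]
    exact hAq θ hθ
  have hBdet : 0 < B.det := det_pos_of_posQuad B hBq
  have hBeq : B = (R.submatrix (fun i : s => (i : Fin d)) (fun j : s => (j : Fin d)))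
      * Matrix.diagonal (fun j : s => C j) := by
    ext i j
    rw [Matrix.mul_diagonal]
    rfl
  rw [hBeq, Matrix.det_mul, Matrix.det_diagonal] at hBdet
  have hP : 0 < ∏ j : s, C j := Finset.prod_pos (fun j _ => hC j)
  nlinarith [hBdet, hP]


theorem pmatrix_from_quadratic_identity {d : ℕ}
    (S : Matrix (Fin d) (Fin d) ℝ) (hS : S.PosDef)
    (R : Matrix (Fin d) (Fin d) ℝ) (C : Fin d → ℝ) (hC : ∀ i, 0 < C i)
    (hid : ∀ θ : Fin d → ℝ,
      ∑ i : Fin d, ∑ j : Fin d, C i * R j i * θ j * θ i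
        = (1/2 : ℝ) * (θ ⬝ᵥ S.mulVec θ)) :
    IsPMatrix R :=
  fun s => pmatrix_aux S hS R C hC hid s
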